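/- arXiv:2206.11419 — 2 statements merged into one kernel-verified Lean document; each statement's English description precedes it below -/
import Mathlib

section
/- Let f : Finset V → ℝ be a monotone submodular set function with f(∅) = 0 on a finite ground set V, and let k ≥ 1. If S* is the result of the standard greedy algorithm that iteratively adds the element with maximum marginal gain for k steps, then f(S*) ≥ (1 − 1/e) · max{f(S) : |S| = k}. -/
lemma submod_union_bound {V : Type*} [DecidableEq V]
    (f : Finset V → ℝ)
    (hmono : ∀ A B : Finset V, A ⊆ B → f A ≤ f B)
    (hsub : ∀ (A B : Finset V) (x : V), A ⊆ B → x ∉ B →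
      f (B ∪ {x}) - f B ≤ f (A ∪ {x}) - f A)
    (A T : Finset V) :
    f (A ∪ T) ≤ f A + ∑ x ∈ T \ A, (f (insert x A) - f A) := by
  induction T using Finset.induction_on with
  | empty => simp
  | @insert y T' hyT' IH =>
    by_cases hyA : y ∈ A
    · rw [Finset.insert_sdiff_of_mem _ hyA, Finset.union_insert,
        Finset.insert_eq_self.mpr (Finset.mem_union_left _ hyA)]
      exact IH
    · rw [Finset.insert_sdiff_of_notMem _ hyA,
        Finset.sum_insert (fun h => hyT' (Finset.mem_sdiff.mp h).1)]
      by_cases hyU : y ∈ A ∪ T'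
      · rw [Finset.union_insert, Finset.insert_eq_self.mpr hyU]
        have hgain : 0 ≤ f (insert y A) - f A := by
          have := hmono A (insert y A) (Finset.subset_insert _ _)
          linarith
        linarith
      · have h := hsub A (A ∪ T') y Finset.subset_union_left hyU
        have hu : ∀ B : Finset V, B ∪ {y} = insert y B := fun B => by
          ext z; simp [or_comm]
        rw [hu, hu] at h
        rw [Finset.union_insert]
        linarith

/-- Greedy guarantee for monotone submodular maximization (Nemhauser–Wolsey–Fisher). -/
theorem stmt_6 {V : Type*} [DecidableEq V] [Fintype V]
    (f : Finset V → ℝ) (k : ℕ) (hk : 1 ≤ k)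
    (hmono : ∀ A B : Finset V, A ⊆ B → f A ≤ f B)
    (hsub : ∀ (A B : Finset V) (x : V), A ⊆ B → x ∉ B →
      f (B ∪ {x}) - f B ≤ f (A ∪ {x}) - f A)
    (hempty : f ∅ = 0)
    (S : ℕ → Finset V) (hS0 : S 0 = ∅)
    (hgreedy : ∀ i < k, ∃ x : V, x ∉ S i ∧ S (i + 1) = insert x (S i) ∧
      ∀ y : V, f (insert y (S i)) - f (S i) ≤ f (insert x (S i)) - f (S i))
    (Sstar : Finset V) (hSstar : Sstar = S k) :
    ∀ T : Finset V, T.card = k → f Sstar ≥ (1 - 1 / Real.exp 1) * f T := by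
  intro T hT
  have hkR : (1:ℝ) ≤ (k:ℝ) := by exact_mod_cast hk
  have hkpos : (0:ℝ) < (k:ℝ) := by linarith
  set c : ℝ := 1 - 1/(k:ℝ) with hc
  have hc0 : 0 ≤ c := by
    rw [hc]
    have : 1/(k:ℝ) ≤ 1 := by
      rw [div_le_one hkpos]; exact hkR
    linarith
  have hTnn : 0 ≤ f T := by
    have := hmono ∅ T (Finset.empty_subset T)
    linarith
  -- key decay
  have key : ∀ i ≤ k, f T - f (S i) ≤ c ^ i * f T := by
    intro i
    induction i with
    | zero => intro _; simp [hS0, hempty]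
    | succ i IH =>
      intro hik
      have hik' : i < k := hik
      have hIH := IH (le_of_lt hik')
      obtain ⟨x, hx, hSx, hmax⟩ := hgreedy i hik'
      set δ : ℝ := f (S (i+1)) - f (S i) with hδ
      have hsum : f T ≤ f (S i) + (k:ℝ) * δ := by
        have h1 : f T ≤ f (S i ∪ T) := hmono T _ Finset.subset_union_right
        have h2 := submod_union_bound f hmono hsub (S i) T
        have h3 : ∑ y ∈ T \ S i, (f (insert y (S i)) - f (S i)) ≤
            (T \ S i).card • δ := by
          apply Finset.sum_le_card_nsmul
          intro y _
          rw [hδ, hSx]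
          exact hmax y
        have hδnn : 0 ≤ δ := by
          have := hmono (S i) (insert x (S i)) (Finset.subset_insert _ _)
          rw [hδ, hSx]; linarith
        have hcard : ((T \ S i).card : ℝ) ≤ (k:ℝ) := by
          have : (T \ S i).card ≤ T.card := Finset.card_le_card (Finset.sdiff_subset)
          exact_mod_cast this.trans_eq hT
        have h4 : ((T \ S i).card : ℝ) * δ ≤ (k:ℝ) * δ :=
          mul_le_mul_of_nonneg_right hcard hδnn
        have h3' : ∑ y ∈ T \ S i, (f (insert y (S i)) - f (S i)) ≤
            ((T \ S i).card : ℝ) * δ := by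
          simpa [nsmul_eq_mul] using h3
        linarith
      have hstep : f T - f (S (i+1)) ≤ c * (f T - f (S i)) := by
        have hinv : (0:ℝ) < 1/(k:ℝ) := by positivity
        have : (f T - f (S i)) / (k:ℝ) ≤ δ := by
          rw [div_le_iff₀ hkpos]
          nlinarith
        have hexp : c * (f T - f (S i)) = (f T - f (S i)) - (f T - f (S i))/(k:ℝ) := by
          rw [hc]; ring
        rw [hexp]
        linarith
      calc f T - f (S (i+1)) ≤ c * (f T - f (S i)) := hstep
        _ ≤ c * (c ^ i * f T) := mul_le_mul_of_nonneg_left hIH hc0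
        _ = c ^ (i+1) * f T := by ring
  have hfinal := key k le_rfl
  have hck : c ^ k ≤ 1 / Real.exp 1 := by
    have h1 : c ≤ Real.exp (-(1/(k:ℝ))) := by
      have := Real.add_one_le_exp (-(1/(k:ℝ)))
      linarith
    have h2 : c ^ k ≤ (Real.exp (-(1/(k:ℝ)))) ^ k := pow_le_pow_left₀ hc0 h1 k
    have h3 : (Real.exp (-(1/(k:ℝ)))) ^ k = Real.exp ((k:ℝ) * (-(1/(k:ℝ)))) :=
      (Real.exp_nat_mul _ k).symm
    have h4 : (k:ℝ) * (-(1/(k:ℝ))) = -1 := by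
      field_simp
    rw [h3, h4, Real.exp_neg] at h2
    simpa [one_div] using h2
  have h5 : c ^ k * f T ≤ (1 / Real.exp 1) * f T :=
    mul_le_mul_of_nonneg_right hck hTnn
  rw [hSstar]
  have : f T - f (S k) ≤ (1 / Real.exp 1) * f T := le_trans hfinal h5
  linarith [this]
end

section
/- Let μ, μ̲, μ̄ : Finset V → ℝ≥0 satisfy μ̲(S) ≤ μ(S) ≤ μ̄(S) for all S. Let S^U, S^L be (1−1/e)-approximate maximizers of μ̄ and μ̲ respectively over size-k sets, let S° maximize μ over size-k sets, and let S* = argmax over {S^L, S^U} of μ. Then μ(S*) ≥ β·(1−1/e)·μ(S°) where β = max{ μ(S^U)/μ̄(S^U), μ̲(S°)/μ(S°) }. -/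
/-- Sandwich approximation guarantee (Lu et al.). -/
theorem stmt_15 {V : Type*} [DecidableEq V] [Fintype V]
    (μ μl μu : Finset V → ℝ) (k : ℕ) (hk : 1 ≤ k)
    (hsand : ∀ S : Finset V, μl S ≤ μ S ∧ μ S ≤ μu S)
    (hlnonneg : ∀ S : Finset V, 0 ≤ μl S)
    (SU SL Sopt Sstar : Finset V)
    (hSUcard : SU.card = k) (hSLcard : SL.card = k) (hSoptcard : Sopt.card = k)
    (hSU : ∀ T : Finset V, T.card = k → μu SU ≥ (1 - 1 / Real.exp 1) * μu T)
    (hSL : ∀ T : Finset V, T.card = k → μl SL ≥ (1 - 1 / Real.exp 1) * μl T)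
    (hSopt : ∀ T : Finset V, T.card = k → μ T ≤ μ Sopt)
    (hμSUpos : 0 < μ SU) (hμuSUpos : 0 < μu SU) (hμSoptpos : 0 < μ Sopt)
    (hSstar : Sstar ∈ ({SL, SU} : Finset (Finset V)) ∧
      μ Sstar = max (μ SL) (μ SU)) :
    μ Sstar ≥ max (μ SU / μu SU) (μl Sopt / μ Sopt) * (1 - 1 / Real.exp 1) * μ Sopt := by
  set c := 1 - 1 / Real.exp 1 with hc
  have hcpos : 0 < c := by
    have h1 : (1:ℝ) < Real.exp 1 := by
      have := Real.add_one_lt_exp (x := 1) one_ne_zero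
      linarith
    have h2 : 1 / Real.exp 1 < 1 := by
      rw [div_lt_one (by positivity)]; exact h1
    rw [hc]; linarith
  have h1 : μ Sstar ≥ (μ SU / μu SU) * c * μ Sopt := by
    have hopt : μ Sopt ≤ μu Sopt := (hsand Sopt).2
    have hUu : μu SU ≥ c * μu Sopt := hSU Sopt hSoptcard
    have : (μ SU / μu SU) * c * μ Sopt ≤ μ SU := by
      have : (μ SU / μu SU) * (c * μ Sopt) ≤ (μ SU / μu SU) * μu SU := by
        apply mul_le_mul_of_nonneg_left _ (by positivity)
        calc c * μ Sopt ≤ c * μu Sopt := by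
              exact mul_le_mul_of_nonneg_left hopt hcpos.le
          _ ≤ μu SU := hUu
      calc (μ SU / μu SU) * c * μ Sopt = (μ SU / μu SU) * (c * μ Sopt) := by ring
        _ ≤ (μ SU / μu SU) * μu SU := this
        _ = μ SU := by field_simp
    have hle : μ SU ≤ μ Sstar := hSstar.2 ▸ le_max_right _ _
    linarith
  have h2 : μ Sstar ≥ (μl Sopt / μ Sopt) * c * μ Sopt := by
    have hLl : μl SL ≥ c * μl Sopt := hSL Sopt hSoptcard
    have h : (μl Sopt / μ Sopt) * c * μ Sopt = c * μl Sopt := by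
      field_simp
    have hle : μ SL ≤ μ Sstar := hSstar.2 ▸ le_max_left _ _
    have hsl := (hsand SL).1
    rw [ge_iff_le, h]
    linarith
  rcases max_cases (μ SU / μu SU) (μl Sopt / μ Sopt) with ⟨h, _⟩ | ⟨h, _⟩ <;>
    rw [h] <;> assumption
end
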